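/- Let X be a nontrivial real normed linear space. Then DW(X) = sup{ ‖u+v‖ / ‖γu+(1−γ)v‖ : u, v ∈ S_X, 0 < γ < 1/2 }. -/

import Mathlib

/-- `DW(X) = sup { ‖u+v‖ / ‖γu+(1−γ)v‖ : u, v ∈ S_X, 0 < γ < 1/2 }`. -/
theorem dunkl_williams_eq_DW2 {X : Type*} [NormedAddCommGroup X] [NormedSpace ℝ X]
    [Nontrivial X] :
    sSup {c : ℝ | ∃ x y : X, x ≠ 0 ∧ y ≠ 0 ∧ x ≠ y ∧
      c = (‖x‖ + ‖y‖) / ‖x - y‖ * ‖‖x‖⁻¹ • x - ‖y‖⁻¹ • y‖} =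
    sSup {c : ℝ | ∃ u v : X, ∃ γ : ℝ, ‖u‖ = 1 ∧ ‖v‖ = 1 ∧ 0 < γ ∧ γ < 1/2 ∧
      c = ‖u + v‖ / ‖γ • u + (1 - γ) • v‖} := by
  congr 1
  ext c
  simp only [Set.mem_setOf_eq]
  constructor
  · rintro ⟨x, y, hx, hy, hxy, rfl⟩
    have ha : 0 < ‖x‖ := norm_pos_iff.mpr hx
    have hb : 0 < ‖y‖ := norm_pos_iff.mpr hy
    have hab : 0 < ‖x‖ + ‖y‖ := by linarith
    have hd : x - y ≠ 0 := sub_ne_zero.mpr hxy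
    have hdn : 0 < ‖x - y‖ := norm_pos_iff.mpr hd
    set a := ‖x‖ with ha'
    set b := ‖y‖ with hb'
    set u := a⁻¹ • x with hu
    set v := -(b⁻¹ • y) with hv
    have hun : ‖u‖ = 1 := by
      rw [hu, norm_smul, Real.norm_eq_abs, abs_of_pos (inv_pos.mpr ha), ← ha',
        inv_mul_cancel₀ ha.ne']
    have hvn : ‖v‖ = 1 := by
      rw [hv, norm_neg, norm_smul, Real.norm_eq_abs, abs_of_pos (inv_pos.mpr hb), ← hb',
        inv_mul_cancel₀ hb.ne']
    have huv : ‖a⁻¹ • x - b⁻¹ • y‖ = ‖u + v‖ := by rw [hu, hv, sub_eq_add_neg]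
    have key : ∀ γ : ℝ, γ = a / (a + b) →
        γ • u + (1 - γ) • v = (a + b)⁻¹ • (x - y) := by
      intro γ hγ
      rw [hu, hv, hγ]
      match_scalars <;> (field_simp; try ring)
    have keyn : ∀ γ : ℝ, γ = a / (a + b) →
        ‖γ • u + (1 - γ) • v‖ = (a + b)⁻¹ * ‖x - y‖ := by
      intro γ hγ
      rw [key γ hγ, norm_smul, Real.norm_eq_abs, abs_of_pos (inv_pos.mpr hab)]
    have hval : ∀ γ : ℝ, γ = a / (a + b) →
        (a + b) / ‖x - y‖ * ‖u + v‖ = ‖u + v‖ / ‖γ • u + (1 - γ) • v‖ := by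
      intro γ hγ
      rw [keyn γ hγ]
      field_simp
    rcases lt_trichotomy a b with hlt | heq | hgt
    · refine ⟨u, v, a / (a + b), hun, hvn, div_pos ha hab, ?_, by rw [huv, hval _ rfl]⟩
      rw [div_lt_div_iff₀ hab (by norm_num)]
      linarith
    · -- a = b, value is 2
      obtain ⟨e, he⟩ := exists_norm_eq X (le_of_lt one_pos)
      refine ⟨e, e, 1/4, he, he, by norm_num, by norm_num, ?_⟩
      have h1 : ((1:ℝ)/4) • e + (1 - (1:ℝ)/4) • e = e := by
        match_scalars; norm_num
      have h2 : ‖e + e‖ = 2 := by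
        rw [show e + e = (2:ℝ) • e by match_scalars <;> norm_num, norm_smul, he]
        norm_num
      have h3 : u + v = a⁻¹ • (x - y) := by
        rw [hu, hv, ← heq, smul_sub, sub_eq_add_neg]
      have h4 : ‖u + v‖ = a⁻¹ * ‖x - y‖ := by
        rw [h3, norm_smul, Real.norm_eq_abs, abs_of_pos (inv_pos.mpr ha)]
      rw [huv, h1, h2, he, h4, ← heq]
      field_simp
      ring
    · refine ⟨v, u, b / (a + b), hvn, hun, div_pos hb hab, ?_, ?_⟩
      · rw [div_lt_div_iff₀ hab (by norm_num)]
        linarith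
      · have h1 : (b/(a+b)) • v + (1 - b/(a+b)) • u = (a/(a+b)) • u + (1 - a/(a+b)) • v := by
          have e1 : (1:ℝ) - b/(a+b) = a/(a+b) := by field_simp; ring
          have e2 : (1:ℝ) - a/(a+b) = b/(a+b) := by field_simp; ring
          rw [e1, e2, add_comm]
        rw [huv, add_comm v u, h1, ← hval _ rfl]
  · rintro ⟨u, v, γ, hun, hvn, hγ0, hγ2, rfl⟩
    have hγ1 : γ < 1 := by linarith
    have hu0 : u ≠ 0 := fun h => by simp [h] at hun
    have hv0 : v ≠ 0 := fun h => by simp [h] at hvn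
    refine ⟨γ • u, -((1 - γ) • v), smul_ne_zero hγ0.ne' hu0,
      neg_ne_zero.mpr (smul_ne_zero (by linarith) hv0), ?_, ?_⟩
    · intro h
      have := congrArg norm h
      rw [norm_smul, norm_neg, norm_smul, hun, hvn, Real.norm_eq_abs, Real.norm_eq_abs,
        abs_of_pos hγ0, abs_of_pos (by linarith : (0:ℝ) < 1 - γ)] at this
      simp at this
      linarith
    · have hnx : ‖γ • u‖ = γ := by
        rw [norm_smul, hun, Real.norm_eq_abs, abs_of_pos hγ0, mul_one]
      have hny : ‖-((1 - γ) • v)‖ = 1 - γ := by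
        rw [norm_neg, norm_smul, hvn, Real.norm_eq_abs,
          abs_of_pos (by linarith : (0:ℝ) < 1 - γ), mul_one]
      have hix : ‖γ • u‖⁻¹ • (γ • u) = u := by
        rw [hnx, smul_smul, inv_mul_cancel₀ hγ0.ne', one_smul]
      have hiy : ‖-((1 - γ) • v)‖⁻¹ • -((1 - γ) • v) = -v := by
        rw [hny, smul_neg, smul_smul, inv_mul_cancel₀ (by linarith : (1:ℝ) - γ ≠ 0), one_smul]
      rw [hix, hiy, hnx, hny, sub_neg_eq_add, sub_neg_eq_add]
      ring
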